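/- For every real $\theta > 0$ and integers $n \ge 2$ and $k \ge 0$, $(n-1)\int_0^1 (1-x)^{n-2}\, x^{\theta}\, \frac{(-\theta \log x)^k}{k!}\, dx = \frac{n-1}{\theta}\sum_{l=1}^{n-1} (-1)^{l-1}\binom{n-2}{l-1}\left(\frac{\theta}{l+\theta}\right)^{k+1}$. (Both sides equal $\mathbb{P}(S_n = k)$, the probability of $k$ segregating sites in a stationary sample of size $n$; the left side exhibits it as a Poisson mixture with mean $-\theta \log X$ where $X$ has density $(n-1)(1-x)^{n-2}$ on $(0,1)$.) -/

import Mathlib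

open Finset Real MeasureTheory Set

private lemma exp_neg_image_Ioi : (fun t : ℝ => Real.exp (-t)) '' Set.Ioi 0 = Set.Ioo 0 1 := by
  ext x
  constructor
  · rintro ⟨t, ht, rfl⟩
    exact ⟨Real.exp_pos _, Real.exp_lt_one_iff.mpr (by simpa using (Set.mem_Ioi.mp ht))⟩
  · rintro ⟨hx0, hx1⟩
    exact ⟨-Real.log x, by simpa using Real.log_neg hx0 hx1, by simp [Real.exp_log hx0]⟩

private lemma exp_neg_injOn : Set.InjOn (fun t : ℝ => Real.exp (-t)) (Set.Ioi 0) := by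
  intro a _ b _ h
  have := Real.exp_injective h
  linarith [neg_injective this]

private lemma hasDeriv (t : ℝ) : HasDerivAt (fun t : ℝ => Real.exp (-t))
    (Real.exp (-t) * (-1)) t :=
  (Real.hasDerivAt_exp (-t)).comp t (hasDerivAt_neg t)

private lemma cov (g : ℝ → ℝ) :
    ∫ x in Set.Ioo (0:ℝ) 1, g x = ∫ t in Set.Ioi (0:ℝ), Real.exp (-t) * g (Real.exp (-t)) := by
  rw [← exp_neg_image_Ioi,
    integral_image_eq_integral_abs_deriv_smul measurableSet_Ioi
      (fun t _ => (hasDeriv t).hasDerivWithinAt) exp_neg_injOn g]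
  refine setIntegral_congr_fun measurableSet_Ioi fun t _ => ?_
  rw [smul_eq_mul]
  congr 1
  rw [mul_neg_one, abs_neg, abs_of_pos (Real.exp_pos _)]

private lemma cov_integrable (g : ℝ → ℝ)
    (h : MeasureTheory.IntegrableOn (fun t => Real.exp (-t) * g (Real.exp (-t)))
      (Set.Ioi (0:ℝ))) :
    MeasureTheory.IntegrableOn g (Set.Ioo (0:ℝ) 1) := by
  rw [← exp_neg_image_Ioi,
    integrableOn_image_iff_integrableOn_abs_deriv_smul measurableSet_Ioi
      (fun t _ => (hasDeriv t).hasDerivWithinAt) exp_neg_injOn g]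
  refine h.congr_fun (fun t _ => ?_) measurableSet_Ioi
  rw [smul_eq_mul, mul_neg_one, abs_neg, abs_of_pos (Real.exp_pos _)]

private lemma transformed_eq (s : ℝ) (k : ℕ) :
    (fun t : ℝ => Real.exp (-t) * (Real.exp (-t) ^ (s - 1) * (-Real.log (Real.exp (-t))) ^ k))
      = fun t : ℝ => t ^ ((k : ℝ) + 1 - 1) * Real.exp (-(s * t)) := by
  funext t
  rw [Real.log_exp, neg_neg, Real.rpow_def_of_pos (Real.exp_pos _), Real.log_exp]
  rw [show (k : ℝ) + 1 - 1 = (k : ℝ) by ring, Real.rpow_natCast]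
  rw [show -(s * t) = -t + -t * (s - 1) by ring, Real.exp_add]
  ring

private lemma key_integrable (s : ℝ) (hs : 0 < s) (k : ℕ) :
    MeasureTheory.IntegrableOn
      (fun x : ℝ => x ^ (s - 1) * (-Real.log x) ^ k) (Set.Ioo (0:ℝ) 1) := by
  apply cov_integrable
  rw [transformed_eq s k]
  have := integrableOn_rpow_mul_exp_neg_mul_rpow (p := 1) (s := (k : ℝ) + 1 - 1) (b := s)
    (by have : (0:ℝ) ≤ k := Nat.cast_nonneg k; linarith) one_pos hs
  refine this.congr_fun (fun t ht => ?_) measurableSet_Ioi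
  simp only [Real.rpow_one]
  ring_nf

private lemma key_integral (s : ℝ) (hs : 0 < s) (k : ℕ) :
    ∫ x in Set.Ioo (0:ℝ) 1, x ^ (s - 1) * (-Real.log x) ^ k
      = (Nat.factorial k : ℝ) / s ^ (k + 1) := by
  rw [cov (fun x => x ^ (s - 1) * (-Real.log x) ^ k), transformed_eq s k,
    Real.integral_rpow_mul_exp_neg_mul_Ioi (by positivity) hs]
  rw [show ((k : ℝ) + 1) = ((k + 1 : ℕ) : ℝ) by push_cast; ring, Real.rpow_natCast]
  rw [show ((k+1 : ℕ) : ℝ) = (k : ℝ) + 1 by push_cast; ring, Real.Gamma_nat_eq_factorial]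
  rw [one_div, inv_pow]
  field_simp

/-- The distribution of the number of segregating sites: the Poisson-mixture form
`(n-1)∫_0^1 (1-x)^{n-2} x^θ (-θ log x)^k / k! dx` equals
`((n-1)/θ) ∑_{l=1}^{n-1} (-1)^{l-1} C(n-2,l-1) (θ/(l+θ))^{k+1}`. -/
theorem stmt_4 (θ : ℝ) (hθ : 0 < θ) (n : ℕ) (hn : 2 ≤ n) (k : ℕ) :
    ((n : ℝ) - 1) * ∫ x in (0:ℝ)..1, (1 - x) ^ (n - 2) * x ^ θ * (-θ * Real.log x) ^ k /
        (Nat.factorial k : ℝ)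
      = ((n : ℝ) - 1) / θ *
          ∑ l ∈ Finset.Icc 1 (n - 1),
            (-1 : ℝ) ^ (l - 1) * (Nat.choose (n - 2) (l - 1) : ℝ) * (θ / (l + θ)) ^ (k + 1) := by
  set m := n - 2 with hm
  have hfac : (Nat.factorial k : ℝ) ≠ 0 := Nat.cast_ne_zero.mpr (Nat.factorial_ne_zero k)
  rw [intervalIntegral.integral_of_le zero_le_one, MeasureTheory.integral_Ioc_eq_integral_Ioo]
  have hint : (∫ x in Set.Ioo (0:ℝ) 1,
        (1 - x) ^ m * x ^ θ * (-θ * Real.log x) ^ k / (Nat.factorial k : ℝ))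
      = ∑ j ∈ Finset.range (m + 1),
          ((-1:ℝ) ^ j * (Nat.choose m j : ℝ) * θ ^ k / (Nat.factorial k : ℝ)) *
            ((Nat.factorial k : ℝ) / ((j : ℝ) + θ + 1) ^ (k + 1)) := by
    have hcong : (∫ x in Set.Ioo (0:ℝ) 1,
          (1 - x) ^ m * x ^ θ * (-θ * Real.log x) ^ k / (Nat.factorial k : ℝ))
        = ∫ x in Set.Ioo (0:ℝ) 1, ∑ j ∈ Finset.range (m + 1),
            ((-1:ℝ) ^ j * (Nat.choose m j : ℝ) * θ ^ k / (Nat.factorial k : ℝ)) *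
              (x ^ ((j : ℝ) + θ + 1 - 1) * (-Real.log x) ^ k) := by
      refine setIntegral_congr_fun measurableSet_Ioo fun x hx => ?_
      obtain ⟨hx0, hx1⟩ := hx
      have hb : ((1:ℝ) - x) ^ m
          = ∑ j ∈ Finset.range (m + 1), (-x) ^ j * 1 ^ (m - j) * (Nat.choose m j : ℝ) := by
        rw [← add_pow]; ring_nf
      rw [hb, Finset.sum_mul, Finset.sum_mul, Finset.sum_div]
      refine Finset.sum_congr rfl fun j _ => ?_
      have hxp : x ^ ((j : ℝ) + θ + 1 - 1) = x ^ j * x ^ θ := by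
        rw [show (j : ℝ) + θ + 1 - 1 = (j : ℝ) + θ by ring, Real.rpow_add hx0,
          Real.rpow_natCast]
      have hth : (-θ * Real.log x) ^ k = θ ^ k * (-Real.log x) ^ k := by
        rw [← mul_pow]; ring_nf
      rw [hxp, hth]
      ring
    have hpos : ∀ j : ℕ, (0:ℝ) < (j : ℝ) + θ + 1 := fun j => by
      have h0 : (0:ℝ) ≤ j := Nat.cast_nonneg j
      linarith
    rw [hcong]
    rw [MeasureTheory.integral_finset_sum
      (f := fun (j : ℕ) (x : ℝ) =>
        ((-1:ℝ) ^ j * (Nat.choose m j : ℝ) * θ ^ k / (Nat.factorial k : ℝ)) *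
          (x ^ ((j : ℝ) + θ + 1 - 1) * (-Real.log x) ^ k))
      _ (fun j _ => (key_integrable ((j : ℝ) + θ + 1) (hpos j) k).const_mul _)]
    refine Finset.sum_congr rfl fun j _ => ?_
    rw [MeasureTheory.integral_const_mul, key_integral _ (hpos j) k]
  rw [hint, show n - 1 = m + 1 from by omega, ← Finset.Ico_add_one_right_eq_Icc, Finset.sum_Ico_eq_sum_range]
  simp only [Nat.add_sub_cancel, Nat.add_sub_cancel_left]
  rw [Finset.mul_sum, Finset.mul_sum]
  refine Finset.sum_congr rfl fun j hj => ?_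
  have hpos : ((j : ℝ) + θ + 1) ^ (k + 1) ≠ 0 := by positivity
  push_cast
  rw [show (1:ℝ) + (j : ℝ) + θ = (j : ℝ) + θ + 1 by ring, div_pow]
  field_simp
  ring
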